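/- Let D be an α-bounded digraph (the underlying undirected graph has no independent set of size α+1). If D has more than α(2α+3) vertices, then D contains a transitive arc, i.e., D is not transitive-free. -/

import Mathlib

/-- An arc `(x, y)` is a *transitive arc* if there is a directed path from `x` to `y`
avoiding the arc `(x, y)` itself. -/
def IsTransArc {V : Type*} (A : V → V → Prop) (x y : V) : Prop :=
  A x y ∧ ∃ l : List V, l.Nodup ∧
    l.Chain' (fun a b => A a b ∧ ¬(a = x ∧ b = y)) ∧
    l.head? = some x ∧ l.getLast? = some y

/-- A digraph is `α`-bounded if every independent set of its underlying undirected
graph has at most `α` vertices. -/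
def AlphaBounded {V : Type*} (A : V → V → Prop) (α : ℕ) : Prop :=
  ∀ S : Set V, (∀ u ∈ S, ∀ w ∈ S, u ≠ w → ¬ A u w ∧ ¬ A w u) → S.ncard ≤ α

/-- Every `α`-bounded digraph on more than `α(2α+3)` vertices contains a transitive arc. -/
theorem alphaBounded_large_has_transitive_arc
    {V : Type*} [Fintype V] (A : V → V → Prop) (α : ℕ)
    (hα : AlphaBounded A α) (hcard : α * (2 * α + 3) < Fintype.card V) :
    ∃ x y : V, IsTransArc A x y := by
  classical
  by_contra h
  push_neg at h
  have hloop : ∀ x, ¬ A x x := by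
    intro x hx
    exact h x x ⟨hx, [x], by simp, List.isChain_singleton _, by simp, by simp⟩
  have keyOut : ∀ x u w, A x u → A x w → u ≠ w → ¬ A u w := by
    intro x u w hxu hxw huw hA
    have hxu' : x ≠ u := fun e => hloop x (e ▸ hxu)
    have hxw' : x ≠ w := fun e => hloop x (e ▸ hxw)
    refine h x w ⟨hxw, [x, u, w], by simp [hxu', hxw', huw], ?_, by simp, by simp⟩
    refine List.isChain_cons_cons.mpr ⟨⟨hxu, fun hc => huw hc.2⟩, ?_⟩
    exact List.isChain_cons_cons.mpr ⟨⟨hA, fun hc => hxu' hc.1.symm⟩, List.isChain_singleton _⟩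
  have keyIn : ∀ x u w, A u x → A w x → u ≠ w → ¬ A u w := by
    intro x u w hux hwx huw hA
    have hux' : u ≠ x := fun e => hloop u (e ▸ hux)
    have hwx' : w ≠ x := fun e => hloop w (e ▸ hwx)
    refine h u x ⟨hux, [u, w, x], by simp [hux', hwx', huw], ?_, by simp, by simp⟩
    refine List.isChain_cons_cons.mpr ⟨⟨hA, fun hc => hwx' hc.2⟩, ?_⟩
    exact List.isChain_cons_cons.mpr ⟨⟨hwx, fun hc => huw (hc.1.symm)⟩, List.isChain_singleton _⟩
  -- out- and in-neighborhoods are independent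
  have houtcard : ∀ x, (Finset.univ.filter (fun y => A x y)).card ≤ α := by
    intro x
    have : ((Finset.univ.filter (fun y => A x y) : Finset V) : Set V).ncard ≤ α := by
      refine hα _ ?_
      intro u hu w hw huw
      simp only [Finset.coe_filter, Set.mem_setOf_eq] at hu hw
      exact ⟨keyOut x u w hu.2 hw.2 huw, keyOut x w u hw.2 hu.2 huw.symm⟩
    rwa [Set.ncard_coe_finset] at this
  have hincard : ∀ x, (Finset.univ.filter (fun y => A y x)).card ≤ α := by
    intro x
    have : ((Finset.univ.filter (fun y => A y x) : Finset V) : Set V).ncard ≤ α := by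
      refine hα _ ?_
      intro u hu w hw huw
      simp only [Finset.coe_filter, Set.mem_setOf_eq] at hu hw
      exact ⟨keyIn x u w hu.2 hw.2 huw, keyIn x w u hw.2 hu.2 huw.symm⟩
    rwa [Set.ncard_coe_finset] at this
  -- closed neighborhoods
  set N : V → Finset V := fun s => Finset.univ.filter (fun v => v = s ∨ A v s ∨ A s v) with hN
  have hNcard : ∀ s, (N s).card ≤ 2 * α + 1 := by
    intro s
    have hsub : N s ⊆ {s} ∪ (Finset.univ.filter (fun y => A y s) ∪ Finset.univ.filter (fun y => A s y)) := by
      intro v hv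
      simp only [hN, Finset.mem_filter, Finset.mem_union, Finset.mem_singleton, Finset.mem_univ,
        true_and] at hv ⊢
      tauto
    calc (N s).card ≤ _ := Finset.card_le_card hsub
      _ ≤ 1 + ((Finset.univ.filter (fun y => A y s)).card + (Finset.univ.filter (fun y => A s y)).card) := by
          refine (Finset.card_union_le _ _).trans ?_
          simp only [Finset.card_singleton]
          exact Nat.add_le_add_left (Finset.card_union_le _ _) 1
      _ ≤ 1 + (α + α) := by
          exact Nat.add_le_add_left (Nat.add_le_add (hincard s) (houtcard s)) 1
      _ = 2 * α + 1 := by ring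
  -- a maximum independent finset
  set indepF : Finset V → Prop := fun s => ∀ u ∈ s, ∀ w ∈ s, u ≠ w → ¬ A u w ∧ ¬ A w u with hind
  have hF : (Finset.univ.powerset.filter indepF).Nonempty := by
    refine ⟨∅, ?_⟩
    simp [hind]
  obtain ⟨S, hSF, hSmax⟩ := Finset.exists_max_image (Finset.univ.powerset.filter indepF) Finset.card hF
  have hSindep : indepF S := (Finset.mem_filter.mp hSF).2
  have hScard : S.card ≤ α := by
    have : ((S : Finset V) : Set V).ncard ≤ α := hα _ (by
      intro u hu w hw huw
      exact hSindep u (by exact_mod_cast hu) w (by exact_mod_cast hw) huw)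
    rwa [Set.ncard_coe_finset] at this
  have cover : ∀ v : V, ∃ s ∈ S, v ∈ N s := by
    intro v
    by_cases hv : v ∈ S
    · exact ⟨v, hv, by simp [hN]⟩
    · by_cases hins : indepF (insert v S)
      · exfalso
        have hmem : insert v S ∈ Finset.univ.powerset.filter indepF := by
          simp only [Finset.mem_filter, Finset.mem_powerset]
          exact ⟨Finset.subset_univ _, hins⟩
        have := hSmax _ hmem
        rw [Finset.card_insert_of_notMem hv] at this
        omega
      · simp only [hind] at hins
        push_neg at hins
        obtain ⟨u, hu, w, hw, huw, harc⟩ := hins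
        have harc' : A u w ∨ A w u := by tauto
        rcases Finset.mem_insert.mp hu with rfl | huS
        · rcases Finset.mem_insert.mp hw with rfl | hwS
          · exact absurd rfl huw
          · refine ⟨w, hwS, ?_⟩
            simp only [hN, Finset.mem_filter, Finset.mem_univ, true_and]
            tauto
        · rcases Finset.mem_insert.mp hw with rfl | hwS
          · refine ⟨u, huS, ?_⟩
            simp only [hN, Finset.mem_filter, Finset.mem_univ, true_and]
            tauto
          · exact absurd harc' (by have := hSindep u huS w hwS huw; tauto)
  have hsub : (Finset.univ : Finset V) ⊆ S.biUnion N := by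
    intro v _
    obtain ⟨s, hs, hvs⟩ := cover v
    exact Finset.mem_biUnion.mpr ⟨s, hs, hvs⟩
  have : Fintype.card V ≤ α * (2 * α + 1) := by
    calc Fintype.card V = (Finset.univ : Finset V).card := rfl
      _ ≤ (S.biUnion N).card := Finset.card_le_card hsub
      _ ≤ ∑ s ∈ S, (N s).card := Finset.card_biUnion_le
      _ ≤ S.card * (2 * α + 1) := Finset.sum_le_card_nsmul _ _ _ (fun s _ => hNcard s)
      _ ≤ α * (2 * α + 1) := Nat.mul_le_mul_right _ hScard
  have : Fintype.card V ≤ α * (2 * α + 3) := this.trans (Nat.mul_le_mul_left _ (by omega))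
  omega
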